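/- The asymptotic expansion of φ(ρ) = 1 - (ρ^K - ρ)/(ρ^{K+1} - 1) at ρ = 1 is φ(ρ) = 2/(K+1) + (1/6)·K(K-1)/(K+1)·(ρ-1)² + O((ρ-1)³); in particular φ''(1) = K(K-1)/(3(K+1)). -/

import Mathlib

open Filter Asymptotics Polynomial Finset

/-- φ(ρ) = 1 - (ρ^K - ρ)/(ρ^{K+1} - 1), extended by continuity at ρ = 1 with value 2/(K+1). -/
noncomputable def phi (K : ℕ) (ρ : ℝ) : ℝ :=
  if ρ = 1 then 2 / (K + 1) else 1 - (ρ ^ K - ρ) / (ρ ^ (K + 1) - 1)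

namespace PhiAux

lemma sum_id (n : ℕ) : ∑ i ∈ Finset.range n, (i:ℝ) = n*(n-1)/2 := by
  induction n with
  | zero => simp
  | succ n ih => rw [Finset.sum_range_succ, ih]; push_cast; ring

lemma sum_id2 (n : ℕ) : ∑ i ∈ Finset.range n, (i:ℝ)*((i:ℝ)-1) = n*(n-1)*(n-2)/3 := by
  induction n with
  | zero => simp
  | succ n ih => rw [Finset.sum_range_succ, ih]; push_cast; ring

noncomputable def Pg (n : ℕ) : Polynomial ℝ := ∑ i ∈ Finset.range n, X^i

lemma ev0 (n : ℕ) : (Pg n).eval 1 = n := by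
  simp [Pg, eval_finset_sum]

lemma ev1 (n : ℕ) : ((Pg n).derivative).eval 1 = n*(n-1)/2 := by
  rw [Pg, map_sum, eval_finset_sum]
  simp only [derivative_X_pow, eval_mul, eval_C, eval_pow, eval_X, one_pow, mul_one]
  exact sum_id n

lemma ev2 (n : ℕ) : ((Pg n).derivative.derivative).eval 1 = n*(n-1)*(n-2)/3 := by
  rw [Pg, map_sum, map_sum, eval_finset_sum, ← sum_id2]
  refine Finset.sum_congr rfl fun i _ => ?_
  match i with
  | 0 => simp
  | 1 => simp
  | (i+2) =>
    simp only [derivative_X_pow, derivative_mul, derivative_C, zero_mul, zero_add,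
      eval_mul, eval_C, eval_pow, eval_X, one_pow, mul_one]
    push_cast [Nat.add_sub_cancel]
    ring

lemma evPg (n : ℕ) (ρ : ℝ) : (Pg n).eval ρ = ∑ i ∈ Finset.range n, ρ^i := by
  simp [Pg, eval_finset_sum]

noncomputable def Sp (m : ℕ) : Polynomial ℝ := Pg (m+3)
noncomputable def Tp (m : ℕ) : Polynomial ℝ := Pg (m+1)
noncomputable def Np (m : ℕ) : Polynomial ℝ := Sp m - X * Tp m

lemma hS0 (m : ℕ) : (Sp m).eval 1 = (m:ℝ)+3 := by
  rw [Sp, ev0]; push_cast; ring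

lemma hS0ne (m : ℕ) : (Sp m).eval 1 ≠ 0 := by
  rw [hS0]; positivity

lemma phi_eq (m : ℕ) (ρ : ℝ) (hS : (Sp m).eval ρ ≠ 0) :
    phi (m+2) ρ = (Np m).eval ρ / (Sp m).eval ρ := by
  by_cases hρ : ρ = 1
  · subst hρ
    rw [phi, if_pos rfl, Np]
    simp only [eval_sub, eval_mul, eval_X, hS0, Sp, Tp, ev0]
    push_cast
    have : (m:ℝ)+3 ≠ 0 := by positivity
    field_simp
    ring
  · rw [phi, if_neg hρ]
    have hden : ρ^(m+3) - 1 = (Sp m).eval ρ * (ρ - 1) := by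
      rw [Sp, evPg, geom_sum_mul]
    have hnum : ρ^(m+2) - ρ = ρ * ((Tp m).eval ρ * (ρ-1)) := by
      rw [Tp, evPg, geom_sum_mul]
      ring
    have h1 : ρ - 1 ≠ 0 := sub_ne_zero.2 hρ
    rw [show m+2+1 = m+3 by ring, hden, hnum, Np]
    simp only [eval_sub, eval_mul, eval_X]
    field_simp

end PhiAux

open PhiAux

/-- Second-order expansion of φ at ρ = 1:
φ(ρ) = 2/(K+1) + (1/6) K(K-1)/(K+1) (ρ-1)² + O((ρ-1)³), and φ''(1) = K(K-1)/(3(K+1)). -/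
theorem phi_expansion_at_one (K : ℕ) (hK : 2 ≤ K) :
    (fun ρ : ℝ => phi K ρ -
        (2 / (K + 1) + 1 / 6 * (K * (K - 1) / (K + 1)) * (ρ - 1) ^ 2))
      =O[nhds 1] (fun ρ : ℝ => (ρ - 1) ^ 3) ∧
    iteratedDeriv 2 (phi K) 1 = K * (K - 1) / (3 * (K + 1)) := by
  obtain ⟨m, rfl⟩ : ∃ m, K = m + 2 := ⟨K - 2, (Nat.sub_add_cancel hK).symm⟩
  clear hK
  have hm3 : (m:ℝ)+3 ≠ 0 := by positivity
  have hm3' : (3:ℝ)+(m:ℝ) ≠ 0 := by positivity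
  have hm6 : (6:ℝ)+(m:ℝ)*2 ≠ 0 := by positivity
  have hm6' : (18:ℝ)+(m:ℝ)*6 ≠ 0 := by positivity
  set a : ℝ := 2/((m:ℝ)+3) with ha
  set c : ℝ := ((m:ℝ)+2)*((m:ℝ)+1)/(6*((m:ℝ)+3)) with hc
  set P : Polynomial ℝ := Np m - (C a + C c * (X - C 1)^2) * Sp m with hP
  have hU : ∀ᶠ ρ in nhds 1, (Sp m).eval ρ ≠ 0 :=
    (Sp m).continuousAt.eventually_ne (hS0ne m)
  -- root computations
  have root0 : P.eval 1 = 0 := by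
    simp only [hP, Np, eval_sub, eval_add, eval_mul, eval_pow, eval_C, eval_X, eval_one,
      sub_self, Sp, Tp, ev0, ha, hc]
    push_cast
    field_simp
    ring_nf
  have root1 : P.derivative.eval 1 = 0 := by
    simp only [hP, Np, derivative_sub, derivative_add, derivative_mul, derivative_C,
      derivative_X, derivative_pow, derivative_one, eval_sub, eval_add, eval_mul, eval_pow,
      eval_C, eval_X, eval_one, sub_self, Sp, Tp, ev0, ev1, ha, hc, eval_zero, derivative_zero]
    push_cast
    field_simp
    ring_nf
  have root2 : P.derivative.derivative.eval 1 = 0 := by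
    simp only [hP, Np, derivative_sub, derivative_add, derivative_mul, derivative_C,
      derivative_X, derivative_pow, derivative_one, eval_sub, eval_add, eval_mul, eval_pow,
      eval_C, eval_X, eval_one, sub_self, Sp, Tp, ev0, ev1, ev2, ha, hc, eval_zero, derivative_zero]
    push_cast
    field_simp
    ring_nf
  have hdvd : (X - C 1)^3 ∣ P := by
    by_cases h0 : P = 0
    · simp [h0]
    · have h2 : 2 < P.rootMultiplicity 1 := by
        rw [Polynomial.lt_rootMultiplicity_iff_isRoot_iterate_derivative_of_mem_nonZeroDivisors h0
          (by
            refine mem_nonZeroDivisors_of_ne_zero ?_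
            norm_num)]
        intro k hk
        interval_cases k
        · exact root0
        · exact root1
        · exact root2
      exact dvd_trans (pow_dvd_pow _ h2) (P.pow_rootMultiplicity_dvd 1)
  obtain ⟨Q, hQ⟩ := hdvd
  have hkey : (fun ρ : ℝ => phi (m+2) ρ -
      (2 / (((m+2:ℕ):ℝ) + 1) + 1 / 6 * (((m+2:ℕ):ℝ) * (((m+2:ℕ):ℝ) - 1) / (((m+2:ℕ):ℝ) + 1)) * (ρ - 1) ^ 2))
      =ᶠ[nhds 1] (fun ρ : ℝ => (Q.eval ρ / (Sp m).eval ρ) * (ρ-1)^3) := by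
    filter_upwards [hU] with ρ hS
    rw [phi_eq m ρ hS]
    have hE : 2 / (((m+2:ℕ):ℝ) + 1) + 1 / 6 * (((m+2:ℕ):ℝ) * (((m+2:ℕ):ℝ) - 1) / (((m+2:ℕ):ℝ) + 1)) * (ρ - 1) ^ 2
        = a + c * (ρ-1)^2 := by
      rw [ha, hc]; push_cast; field_simp; ring
    rw [hE]
    have hPev : P.eval ρ = (Np m).eval ρ - (a + c * (ρ-1)^2) * (Sp m).eval ρ := by
      simp [hP]
    have hQev : P.eval ρ = (ρ-1)^3 * Q.eval ρ := by
      rw [hQ]; simp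
    have hmain : (Np m).eval ρ - (a + c*(ρ-1)^2) * (Sp m).eval ρ = (ρ-1)^3 * Q.eval ρ :=
      hPev.symm.trans hQev
    field_simp
    linear_combination hmain
  constructor
  · have hcont : ContinuousAt (fun ρ : ℝ => Q.eval ρ / (Sp m).eval ρ) 1 :=
      Q.continuousAt.div (Sp m).continuousAt (hS0ne m)
    have hb : (fun ρ : ℝ => Q.eval ρ / (Sp m).eval ρ) =O[nhds 1]
        (fun _ : ℝ => (1:ℝ)) := Filter.Tendsto.isBigO_one (F := ℝ) hcont.tendsto
    have := hb.mul (isBigO_refl (fun ρ:ℝ => (ρ-1)^3) (nhds 1))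
    refine this.congr' hkey.symm ?_
    filter_upwards with x using one_mul _
  · have hg : phi (m+2) =ᶠ[nhds 1] fun ρ => (Np m).eval ρ / (Sp m).eval ρ := by
      filter_upwards [hU] with ρ h using phi_eq m ρ h
    set A : Polynomial ℝ := derivative (Np m) * Sp m - Np m * derivative (Sp m) with hA
    have h1 : deriv (fun ρ => (Np m).eval ρ / (Sp m).eval ρ) =ᶠ[nhds 1]
        fun ρ => A.eval ρ / (Sp m * Sp m).eval ρ := by
      filter_upwards [hU] with ρ h
      have hd : HasDerivAt (fun ρ => (Np m).eval ρ / (Sp m).eval ρ) _ ρ :=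
        ((Np m).hasDerivAt ρ).div ((Sp m).hasDerivAt ρ) h
      rw [hd.deriv]
      simp only [hA, eval_sub, eval_mul]
      rw [pow_two]
    have hSS : (Sp m * Sp m).eval 1 ≠ 0 := by
      simp only [eval_mul]; exact mul_ne_zero (hS0ne m) (hS0ne m)
    have hd2 : HasDerivAt (fun ρ => A.eval ρ / (Sp m * Sp m).eval ρ) _ 1 :=
      (A.hasDerivAt 1).div ((Sp m * Sp m).hasDerivAt 1) hSS
    have h2 : iteratedDeriv 2 (phi (m+2)) 1
        = deriv (fun ρ => A.eval ρ / (Sp m * Sp m).eval ρ) 1 := by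
      rw [show (2:ℕ) = 1 + 1 from rfl, iteratedDeriv_succ, iteratedDeriv_one]
      exact (hg.deriv.trans h1).deriv_eq
    rw [h2, hd2.deriv]
    simp only [hA, Np, Sp, Tp, derivative_sub, derivative_mul, derivative_X, one_mul,
      derivative_add, eval_sub, eval_mul, eval_add, eval_X, ev0, ev1, ev2]
    push_cast
    field_simp
    ring
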